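/- Suppose f(y) > 0 for all y ∈ Y, and suppose α > p*/q*. Then the set of global minimizers of the loss function L over Y coincides with the set of optimal solutions of the CMPE problem: a point y ∈ Y minimizes L over Y if and only if g(y) ≤ 0 and f(y) = p*. -/
import Mathlib


/-- Global minimizers of the loss `L` coincide with the optimal solutions of CMPE:
`y` minimizes `L` over `Y` iff `g y ≤ 0` and `f y = p*`. -/
theorem cmpe_loss_minimizers_eq_optimal {Y : Type*} [Fintype Y] [Nonempty Y]
    (f g : Y → ℝ) (α : ℝ)
    (hfeas : (Finset.univ.filter (fun y => g y ≤ 0)).Nonempty)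
    (hinfeas : (Finset.univ.filter (fun y => 0 < g y)).Nonempty)
    (hf : ∀ y, 0 < f y)
    (pstar qstar : ℝ)
    (hp : pstar = (Finset.univ.filter (fun y => g y ≤ 0)).inf' hfeas f)
    (hq : qstar = (Finset.univ.filter (fun y => 0 < g y)).inf' hinfeas (fun y => f y + g y))
    (hα : α > pstar / qstar)
    (L : Y → ℝ)
    (hL : ∀ y, L y = if g y ≤ 0 then f y else α * (f y + g y)) :
    ∀ y : Y, (∀ z : Y, L y ≤ L z) ↔ (g y ≤ 0 ∧ f y = pstar) := by
  have hp_pos : 0 < pstar := by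
    rw [hp, Finset.lt_inf'_iff]
    intro b _; exact hf b
  have hq_pos : 0 < qstar := by
    rw [hq, Finset.lt_inf'_iff]
    intro b hb
    rw [Finset.mem_filter] at hb
    exact add_pos (hf b) hb.2
  have hα_pos : 0 < α := lt_trans (div_pos hp_pos hq_pos) hα
  have hkey : pstar < α * qstar := (div_lt_iff₀ hq_pos).mp hα
  -- for infeasible z, L z > pstar
  have hinf : ∀ z, ¬ g z ≤ 0 → pstar < L z := by
    intro z hz
    rw [hL z, if_neg hz]
    have hzmem : z ∈ Finset.univ.filter (fun y => 0 < g y) := by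
      simp [lt_of_not_ge hz]
    have h1 : qstar ≤ f z + g z := hq ▸ Finset.inf'_le _ hzmem
    calc pstar < α * qstar := hkey
      _ ≤ α * (f z + g z) := by
          exact mul_le_mul_of_nonneg_left h1 (le_of_lt hα_pos)
  -- for feasible z, pstar ≤ L z
  have hfea : ∀ z, g z ≤ 0 → pstar ≤ f z := by
    intro z hz
    have hzmem : z ∈ Finset.univ.filter (fun y => g y ≤ 0) := by simp [hz]
    exact hp ▸ Finset.inf'_le _ hzmem
  obtain ⟨y0, hy0mem, hy0⟩ := Finset.exists_mem_eq_inf'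
    hfeas f
  rw [Finset.mem_filter] at hy0mem
  have hLy0 : L y0 = pstar := by rw [hL y0, if_pos hy0mem.2, hp, hy0]
  intro y
  constructor
  · intro hmin
    have hle : L y ≤ pstar := hLy0 ▸ hmin y0
    by_cases hy : g y ≤ 0
    · refine ⟨hy, le_antisymm ?_ (hfea y hy)⟩
      rw [hL y, if_pos hy] at hle; exact hle
    · exact absurd hle (not_le.mpr (hinf y hy))
  · rintro ⟨hy, hfy⟩ z
    have hLy : L y = pstar := by rw [hL y, if_pos hy, hfy]
    rw [hLy]
    by_cases hz : g z ≤ 0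
    · rw [hL z, if_pos hz]; exact hfea z hz
    · exact le_of_lt (hinf z hz)
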